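/- Affine closure commutes with existential quantification over a variable: for any set M ⊆ 𝔽₂ⁿ and any coordinate v, aff(∃v M) = ∃v (aff(M)), where ∃v S = {ν | ν ∈ S ∨ ν + e_v ∈ S} and aff denotes the smallest superset closed under ternary XOR. -/
import Mathlib


def aff {n : ℕ} (M : Set (Fin n → ZMod 2)) : Set (Fin n → ZMod 2) :=
  ⋂₀ {S | M ⊆ S ∧ ∀ μ₁ ∈ S, ∀ μ₂ ∈ S, ∀ μ₃ ∈ S, μ₁ + μ₂ + μ₃ ∈ S}

def exQ {n : ℕ} (v : Fin n) (S : Set (Fin n → ZMod 2)) : Set (Fin n → ZMod 2) :=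
  {ν | ν ∈ S ∨ ν + Pi.single v 1 ∈ S}

lemma aff_subset {n : ℕ} (M : Set (Fin n → ZMod 2)) : M ⊆ aff M :=
  fun x hx => Set.mem_sInter.2 fun _ hS => hS.1 hx

lemma aff_closed {n : ℕ} (M : Set (Fin n → ZMod 2)) {a b c : Fin n → ZMod 2}
    (ha : a ∈ aff M) (hb : b ∈ aff M) (hc : c ∈ aff M) : a + b + c ∈ aff M :=
  Set.mem_sInter.2 fun S hS => hS.2 _ (Set.mem_sInter.1 ha S hS) _
    (Set.mem_sInter.1 hb S hS) _ (Set.mem_sInter.1 hc S hS)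

lemma aff_le {n : ℕ} {M S : Set (Fin n → ZMod 2)} (h1 : M ⊆ S)
    (h2 : ∀ μ₁ ∈ S, ∀ μ₂ ∈ S, ∀ μ₃ ∈ S, μ₁ + μ₂ + μ₃ ∈ S) : aff M ⊆ S :=
  fun _ hx => Set.mem_sInter.1 hx S ⟨h1, h2⟩

lemma aff_mono {n : ℕ} {M N : Set (Fin n → ZMod 2)} (h : M ⊆ N) : aff M ⊆ aff N :=
  aff_le (h.trans (aff_subset N)) (fun _ ha _ hb _ hc => aff_closed N ha hb hc)

lemma self_add_self {n : ℕ} (x : Fin n → ZMod 2) : x + x = 0 := by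
  funext i
  exact CharTwo.add_self_eq_zero _

theorem stmt5 {n : ℕ} (M : Set (Fin n → ZMod 2)) (v : Fin n) :
    aff (exQ v M) = exQ v (aff M) := by
  set e : Fin n → ZMod 2 := Pi.single v 1 with he
  have hee : e + e = 0 := self_add_self e
  apply Set.Subset.antisymm
  · -- aff (exQ v M) ⊆ exQ v (aff M)
    apply aff_le
    · intro x hx
      rcases hx with hx | hx
      · exact Or.inl (aff_subset M hx)
      · exact Or.inr (aff_subset M hx)
    · rintro a (ha | ha) b (hb | hb) c (hc | hc)
      · exact Or.inl (aff_closed M ha hb hc)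
      · refine Or.inr ?_
        have := aff_closed M ha hb hc
        have h : a + b + (c + e) = a + b + c + e := by abel
        rwa [h] at this
      · refine Or.inr ?_
        have := aff_closed M ha hb hc
        have h : a + (b + e) + c = a + b + c + e := by abel
        rwa [h] at this
      · refine Or.inl ?_
        have := aff_closed M ha hb hc
        have h : a + (b + e) + (c + e) = a + b + c + (e + e) := by abel
        rwa [h, hee, add_zero] at this
      · refine Or.inr ?_
        have := aff_closed M ha hb hc
        have h : (a + e) + b + c = a + b + c + e := by abel
        rwa [h] at this
      · refine Or.inl ?_
        have := aff_closed M ha hb hc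
        have h : (a + e) + b + (c + e) = a + b + c + (e + e) := by abel
        rwa [h, hee, add_zero] at this
      · refine Or.inl ?_
        have := aff_closed M ha hb hc
        have h : (a + e) + (b + e) + c = a + b + c + (e + e) := by abel
        rwa [h, hee, add_zero] at this
      · refine Or.inr ?_
        have := aff_closed M ha hb hc
        have h : (a + e) + (b + e) + (c + e) = a + b + c + e + (e + e) := by abel
        rwa [h, hee, add_zero] at this
  · -- exQ v (aff M) ⊆ aff (exQ v M)
    have hsub : aff M ⊆ aff (exQ v M) := aff_mono (fun x hx => Or.inl hx)
    have hstab : ∀ x ∈ aff (exQ v M), x + e ∈ aff (exQ v M) := by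
      have key : aff (exQ v M) ⊆ {x | x ∈ aff (exQ v M) ∧ x + e ∈ aff (exQ v M)} := by
        apply aff_le
        · intro x hx
          refine ⟨aff_subset _ hx, aff_subset _ ?_⟩
          rcases hx with hx | hx
          · exact Or.inr (by rwa [add_assoc, hee, add_zero])
          · exact Or.inl hx
        · rintro a ⟨ha1, ha2⟩ b ⟨hb1, hb2⟩ c ⟨hc1, hc2⟩
          refine ⟨aff_closed _ ha1 hb1 hc1, ?_⟩
          have := aff_closed _ ha2 hb1 hc1
          have h : (a + e) + b + c = a + b + c + e := by abel
          rwa [h] at this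
      exact fun x hx => (key hx).2
    rintro x (hx | hx)
    · exact hsub hx
    · have := hstab _ (hsub hx)
      rwa [add_assoc, hee, add_zero] at this
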